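/- Let Q be a probability measure on a measurable space M, let L : M → [0,∞) be measurable, and let λ > 0. Assume 0 < ∫ exp(−L(θ)/λ) dQ(θ) < ∞, and let P* be the probability measure with density dP*/dQ(θ) = exp(−L(θ)/λ) / ∫ exp(−L(ν)/λ) dQ(ν) with respect to Q, and assume ∫ L dP* + λ ∫ (dP*/dQ)·log(dP*/dQ) dQ is finite. Then P* is the unique minimizer of P ↦ ∫ L dP + λ ∫ (dP/dQ)·log(dP/dQ) dQ over all probability measures P ≪ Q: for any such P with P ≠ P*, the objective at P (taken as +∞ when not finite) is strictly greater than the objective at P*. -/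

import Mathlib

open MeasureTheory Real Set

lemma gibbs_pw_pos {x y : ℝ} (hx : 0 ≤ x) (hy : 0 < y) (hxy : x ≠ y) :
    0 < x * Real.log x - x * Real.log y - x + y := by
  rcases hx.eq_or_lt with h | hx'
  · simp [← h, hy]
  · have hyx : (0:ℝ) < y / x := by positivity
    have hne : y / x ≠ 1 := by
      intro h
      apply hxy
      field_simp at h
      linarith
    have h1 : Real.log (y / x) < y / x - 1 := Real.log_lt_sub_one_of_pos hyx hne
    rw [Real.log_div hy.ne' hx'.ne'] at h1
    have h2 : x * (Real.log y - Real.log x) < x * (y / x - 1) :=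
      mul_lt_mul_of_pos_left h1 hx'
    have h3 : x * (y / x - 1) = y - x := by field_simp
    nlinarith

lemma gibbs_pw_nonneg {x y : ℝ} (hx : 0 ≤ x) (hy : 0 < y) :
    0 ≤ x * Real.log x - x * Real.log y - x + y := by
  by_cases h : x = y
  · subst h; ring_nf; exact le_refl _
  · exact (gibbs_pw_pos hx hy h).le

/-- **Type-I relative entropy regularization (Kullback–Leibler divergence,
`f x = x log x`): the Gibbs measure is the unique solution.**
If `0 < ∫ exp (-L/λ) dQ < ∞` and `P*` is the Gibbs measure with density
`ρ θ = exp (-L θ / λ) / ∫ exp (-L ν / λ) dQ(ν)` with respect to `Q`, then `P*` is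
the unique minimizer of `P ↦ ∫ L dP + λ ∫ (dP/dQ) log (dP/dQ) dQ` over probability
measures `P ≪ Q` (the objective being `+∞` when not finite). -/
theorem erm_kl_regularization_gibbs_unique
    {M : Type*} [MeasurableSpace M]
    (Q : Measure M) [IsProbabilityMeasure Q]
    (L : M → ℝ) (hL_meas : Measurable L) (hL_nonneg : ∀ θ, 0 ≤ L θ)
    (lam : ℝ) (hlam : 0 < lam)
    (hZ_int : Integrable (fun θ => Real.exp (-(L θ) / lam)) Q)
    (hZ_pos : 0 < ∫ θ, Real.exp (-(L θ) / lam) ∂Q)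
    (ρ : M → ℝ)
    (hρ : ∀ θ, ρ θ =
      Real.exp (-(L θ) / lam) / ∫ ν, Real.exp (-(L ν) / lam) ∂Q)
    (Pstar : Measure M)
    (hPstar : Pstar = Q.withDensity (fun θ => ENNReal.ofReal (ρ θ)))
    (hL_int : Integrable L Pstar)
    (hf_int : Integrable (fun θ => ρ θ * Real.log (ρ θ)) Q) :
    IsProbabilityMeasure Pstar ∧
      ∀ P : Measure M, IsProbabilityMeasure P → P ≪ Q → P ≠ Pstar →
        (Integrable L P →
          Integrable
            (fun θ => ((P.rnDeriv Q θ).toReal) * Real.log ((P.rnDeriv Q θ).toReal)) Q →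
          ∫ θ, L θ ∂Pstar + lam * ∫ θ, ρ θ * Real.log (ρ θ) ∂Q <
            ∫ θ, L θ ∂P +
              lam * ∫ θ, ((P.rnDeriv Q θ).toReal) * Real.log ((P.rnDeriv Q θ).toReal) ∂Q) := by
  set Z : ℝ := ∫ ν, Real.exp (-(L ν) / lam) ∂Q with hZdef
  have hρ_pos : ∀ θ, 0 < ρ θ := fun θ => by
    rw [hρ θ]; exact div_pos (Real.exp_pos _) hZ_pos
  have hρ_meas : Measurable ρ := by
    have : ρ = fun θ => Real.exp (-(L θ) / lam) / Z := funext hρ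
    rw [this]
    exact ((hL_meas.neg.div_const lam).exp).div_const Z
  have hρ_int : Integrable ρ Q := by
    have : ρ = fun θ => Real.exp (-(L θ) / lam) / Z := funext hρ
    rw [this]; exact hZ_int.div_const Z
  have h_intρ : ∫ θ, ρ θ ∂Q = 1 := by
    have : ρ = fun θ => Real.exp (-(L θ) / lam) / Z := funext hρ
    rw [this, integral_div]
    exact div_self hZ_pos.ne'
  have hlogρ : ∀ θ, Real.log (ρ θ) = -(L θ) / lam - Real.log Z := by
    intro θ
    rw [hρ θ, Real.log_div (Real.exp_ne_zero _) hZ_pos.ne', Real.log_exp]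
  -- Pstar is a probability measure
  have hPs_prob : IsProbabilityMeasure Pstar := by
    constructor
    rw [hPstar, withDensity_apply _ MeasurableSet.univ, setLIntegral_univ,
      ← ofReal_integral_eq_lintegral_ofReal hρ_int
        (Filter.Eventually.of_forall fun θ => (hρ_pos θ).le),
      h_intρ, ENNReal.ofReal_one]
  refine ⟨hPs_prob, ?_⟩
  intro P hP hPQ hPne hLP hglg
  set g : M → ℝ := fun θ => (P.rnDeriv Q θ).toReal with hgdef
  have hg_nonneg : ∀ θ, 0 ≤ g θ := fun θ => ENNReal.toReal_nonneg
  have hg_int : Integrable g Q := Measure.integrable_toReal_rnDeriv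
  have h_intg : ∫ θ, g θ ∂Q = 1 := by
    rw [hgdef]
    rw [Measure.integral_toReal_rnDeriv hPQ]
    simp
  have hgL_int : Integrable (fun θ => g θ * L θ) Q := by
    simpa [smul_eq_mul] using (MeasureTheory.integrable_rnDeriv_smul_iff hPQ).mpr hLP
  have h_intgL : ∫ θ, g θ * L θ ∂Q = ∫ θ, L θ ∂P := by
    simpa [smul_eq_mul] using MeasureTheory.integral_rnDeriv_smul hPQ (f := L)
  -- rewrite g * log ρ
  have hglρ_eq : (fun θ => g θ * Real.log (ρ θ))
      = fun θ => -(1/lam) * (g θ * L θ) - Real.log Z * g θ := by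
    funext θ
    rw [hlogρ θ]
    field_simp
  have hglρ_int : Integrable (fun θ => g θ * Real.log (ρ θ)) Q := by
    rw [hglρ_eq]
    exact (hgL_int.const_mul _).sub (hg_int.const_mul _)
  have h_intglρ : ∫ θ, g θ * Real.log (ρ θ) ∂Q
      = -(1/lam) * ∫ θ, L θ ∂P - Real.log Z := by
    rw [hglρ_eq, integral_sub (hgL_int.const_mul _) (hg_int.const_mul _),
      integral_const_mul, integral_const_mul, h_intg, h_intgL, mul_one]
  -- ∫ L dPstar
  have hρL_eq : (fun θ => ρ θ * L θ)
      = fun θ => -lam * (ρ θ * Real.log (ρ θ)) - (lam * Real.log Z) * ρ θ := by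
    funext θ
    rw [hlogρ θ]
    field_simp
    ring
  have hρL_int : Integrable (fun θ => ρ θ * L θ) Q := by
    rw [hρL_eq]
    exact (hf_int.const_mul _).sub (hρ_int.const_mul _)
  have h_intLPs : ∫ θ, L θ ∂Pstar = ∫ θ, ρ θ * L θ ∂Q := by
    have h1 : ∫ θ, L θ ∂(Q.withDensity fun θ => ((Real.toNNReal (ρ θ) : NNReal) : ENNReal))
        = ∫ θ, (Real.toNNReal (ρ θ)) • L θ ∂Q :=
      integral_withDensity_eq_integral_smul (f := fun θ => Real.toNNReal (ρ θ))
        (by exact measurable_real_toNNReal.comp hρ_meas) L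
    calc ∫ θ, L θ ∂Pstar = ∫ θ, (Real.toNNReal (ρ θ)) • L θ ∂Q := by rw [hPstar]; exact h1
      _ = ∫ θ, ρ θ * L θ ∂Q := by
          congr 1
          funext θ
          rw [NNReal.smul_def, Real.coe_toNNReal _ (hρ_pos θ).le, smul_eq_mul]
  have h_intLPs' : ∫ θ, L θ ∂Pstar
      = -lam * ∫ θ, ρ θ * Real.log (ρ θ) ∂Q - lam * Real.log Z := by
    rw [h_intLPs, hρL_eq, integral_sub (hf_int.const_mul _) (hρ_int.const_mul _),
      integral_const_mul, integral_const_mul, h_intρ, mul_one]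
  -- the nonnegative function φ
  set φ : M → ℝ := fun θ => g θ * Real.log (g θ) - g θ * Real.log (ρ θ) - g θ + ρ θ
    with hφdef
  have hφ_int : Integrable φ Q := ((hglg.sub hglρ_int).sub hg_int).add hρ_int
  have hφ_nonneg : ∀ θ, 0 ≤ φ θ := fun θ =>
    gibbs_pw_nonneg (hg_nonneg θ) (hρ_pos θ)
  -- g ≠ ρ a.e. (else P = Pstar)
  have hne_ae : ¬ (g =ᵐ[Q] ρ) := by
    intro h
    apply hPne
    have h1 : (fun θ => P.rnDeriv Q θ) =ᵐ[Q] fun θ => ENNReal.ofReal (ρ θ) := by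
      filter_upwards [h, Measure.rnDeriv_lt_top P Q] with θ hθ hlt
      rw [← hθ, hgdef]
      exact (ENNReal.ofReal_toReal hlt.ne).symm
    rw [← Measure.withDensity_rnDeriv_eq P Q hPQ, hPstar]
    exact withDensity_congr_ae h1
  -- ∫ φ > 0
  have hφ_pos : 0 < ∫ θ, φ θ ∂Q := by
    rcases (integral_nonneg (f := φ) hφ_nonneg).lt_or_eq with h | h
    · exact h
    · exfalso
      have h0 : φ =ᵐ[Q] 0 :=
        (integral_eq_zero_iff_of_nonneg_ae
          (Filter.Eventually.of_forall hφ_nonneg) hφ_int).mp h.symm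
      apply hne_ae
      filter_upwards [h0] with θ hθ
      by_contra hc
      exact (gibbs_pw_pos (hg_nonneg θ) (hρ_pos θ) hc).ne' hθ
  have h_intφ : ∫ θ, φ θ ∂Q
      = ∫ θ, g θ * Real.log (g θ) ∂Q - ∫ θ, g θ * Real.log (ρ θ) ∂Q - 1 + 1 := by
    have I1 : Integrable (fun θ => g θ * Real.log (g θ) - g θ * Real.log (ρ θ)) Q :=
      hglg.sub hglρ_int
    have I2 : Integrable (fun θ => g θ * Real.log (g θ) - g θ * Real.log (ρ θ) - g θ) Q :=
      I1.sub hg_int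
    simp only [hφdef]
    rw [integral_add I2 hρ_int, integral_sub I1 hg_int, integral_sub hglg hglρ_int,
      h_intg, h_intρ]
  -- conclude
  have hAB : 0 < ∫ θ, g θ * Real.log (g θ) ∂Q - ∫ θ, g θ * Real.log (ρ θ) ∂Q := by
    rw [h_intφ] at hφ_pos; linarith
  have h_intLP : ∫ θ, L θ ∂P
      = -lam * ∫ θ, g θ * Real.log (ρ θ) ∂Q - lam * Real.log Z := by
    have := h_intglρ
    field_simp at this ⊢
    linarith
  rw [h_intLPs', h_intLP]
  nlinarith [mul_pos hlam hAB]
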